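/- arXiv:1402.7243 — 3 statements merged into one kernel-verified Lean document; each statement's English description precedes it below -/
import Mathlib

section
/- Let R, S, ψ be a numerical solution of the semi-discrete energy-conservative DG scheme for the Riemann-invariant (RS) formulation with periodic boundary conditions; that is, for every t ∈ [0,T] and all test functions φ, η, ζ ∈ X^p_Δx(Ω): (i) Σ_{j=1}^N [ ∫_{Ω_j} ∂_tR·φ dx + ∫_{Ω_j} c(ψ)·R·∂_xφ dx − c̄_{j+1/2}·R̄_{j+1/2}·φ⁻_{j+1/2} + c̄_{j−1/2}·R̄_{j−1/2}·φ⁺_{j−1/2} ] = Σ_{j=1}^N [ (1/2)∫_{Ω_j} c(ψ)·∂_x(Rφ) dx − (1/2)c̄_{j+1/2}R⁻_{j+1/2}φ⁻_{j+1/2} + (1/2)c̄_{j−1/2}R⁺_{j−1/2}φ⁺_{j−1/2} − (1/2)∫_{Ω_j} c(ψ)·∂_x(Sφ) dx + (1/2)c̄_{j+1/2}S⁻_{j+1/2}φ⁻_{j+1/2} − (1/2)c̄_{j−1/2}S⁺_{j−1/2}φ⁺_{j−1/2} ]; (ii) Σ_{j=1}^N [ ∫_{Ω_j} ∂_tS·η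 dx − ∫_{Ω_j} c(ψ)·S·∂_xη dx + c̄_{j+1/2}·S̄_{j+1/2}·η⁻_{j+1/2} − c̄_{j−1/2}·S̄_{j−1/2}·η⁺_{j−1/2} ] = Σ_{j=1}^N [ (1/2)∫_{Ω_j} c(ψ)·∂_x(Rη) dx − (1/2)c̄_{j+1/2}R⁻_{j+1/2}η⁻_{j+1/2} + (1/2)c̄_{j−1/2}R⁺_{j−1/2}η⁺_{j−1/2} − (1/2)∫_{Ω_j} c(ψ)·∂_x(Sη) dx + (1/2)c̄_{j+1/2}S⁻_{j+1/2}η⁻_{j+1/2} − (1/2)c̄_{j−1/2}S⁺_{j−1/2}η⁺_{j−1/2} ]; (iii) Σ_{j=1}^N ∫_{Ω_j} ∂_tψ·ζ dx = Σ_{j=1}^N ∫_{Ω_j} ((R+S)/2)·ζ dx. Then the discrete energy t ↦ Σ_{j=1}^N ∫_{Ω_j} (R(t,x)² + S(t,x)²)/2 dx has derivative zero for every t ∈ [0,T], i.e. it is constant in time. -/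
open Finset

noncomputable section

open Finset intervalIntegral MeasureTheory

lemma partial_hasDerivAt (f : ℝ → ℝ → ℝ) (hf : ContDiff ℝ 1 (Function.uncurry f)) (s y : ℝ) :
    HasDerivAt (fun s' => f s' y) (fderiv ℝ (Function.uncurry f) (s, y) (1, 0)) s := by
  have h1 : HasFDerivAt (Function.uncurry f) (fderiv ℝ (Function.uncurry f) (s, y)) (s, y) :=
    (hf.differentiable one_ne_zero (s, y)).hasFDerivAt
  have h2 : HasDerivAt (fun s' : ℝ => (s', y)) ((1 : ℝ), (0 : ℝ)) s :=
    (hasDerivAt_id s).prodMk (hasDerivAt_const s y)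
  exact h1.comp_hasDerivAt s h2

lemma partial_deriv_continuous (f : ℝ → ℝ → ℝ) (hf : ContDiff ℝ 1 (Function.uncurry f)) :
    Continuous (fun p : ℝ × ℝ => deriv (fun s' => f s' p.2) p.1) := by
  have h : (fun p : ℝ × ℝ => deriv (fun s' => f s' p.2) p.1)
      = fun p : ℝ × ℝ => fderiv ℝ (Function.uncurry f) p ((1 : ℝ), (0 : ℝ)) :=
    funext fun p => (partial_hasDerivAt f hf p.1 p.2).deriv
  rw [h]
  exact (hf.continuous_fderiv one_ne_zero).clm_apply continuous_const

lemma hasDerivAt_intervalIntegral_param (a b : ℝ) (f : ℝ → ℝ → ℝ)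
    (hf : ContDiff ℝ 1 (Function.uncurry f)) (t : ℝ) :
    HasDerivAt (fun s => ∫ y in a..b, f s y)
      (∫ y in a..b, deriv (fun s' => f s' y) t) t := by
  obtain ⟨C, hC⟩ := ((isCompact_closedBall t 1).prod isCompact_uIcc).exists_bound_of_continuousOn
    (partial_deriv_continuous f hf).continuousOn
  refine (intervalIntegral.hasDerivAt_integral_of_dominated_loc_of_deriv_le
    (F := f) (F' := fun s y => deriv (fun s' => f s' y) s) (bound := fun _ => C)
    (Metric.ball_mem_nhds t one_pos) ?_ ?_ ?_ ?_ ?_ ?_).2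
  · exact Filter.Eventually.of_forall fun s =>
      (hf.continuous.comp (Continuous.prodMk_right s)).aestronglyMeasurable
  · exact (hf.continuous.comp (Continuous.prodMk_right t)).intervalIntegrable _ _
  · exact ((partial_deriv_continuous f hf).comp (Continuous.prodMk_right t)).aestronglyMeasurable
  · refine Filter.Eventually.of_forall fun y hy s hs => ?_
    exact hC (s, y) ⟨Metric.ball_subset_closedBall hs, Set.Ioc_subset_Icc_self hy⟩
  · exact intervalIntegrable_const
  · exact Filter.Eventually.of_forall fun y _ s _ =>
      (partial_hasDerivAt f hf s y).differentiableAt.hasDerivAt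


/-- The wave speed `c(u) = √(α cos²u + β sin²u)`. -/
def waveC (α β u : ℝ) : ℝ :=
  Real.sqrt (α * Real.cos u ^ 2 + β * Real.sin u ^ 2)

/-- Left endpoint `x_{j-1/2}` of cell `Ω_j`. -/
def cellL {N : ℕ} (x : Fin (N + 1) → ℝ) (j : Fin N) : ℝ := x j.castSucc

/-- Right endpoint `x_{j+1/2}` of cell `Ω_j`. -/
def cellR {N : ℕ} (x : Fin (N + 1) → ℝ) (j : Fin N) : ℝ := x j.succ

/-- Minus (left) trace `u⁻_{j+1/2}` of the grid function `u` at the interface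
to the right of cell `j`, at time `t`. -/
def trM {N : ℕ} (x : Fin (N + 1) → ℝ) (u : Fin N → ℝ → ℝ → ℝ) (t : ℝ) (j : Fin N) : ℝ :=
  u j t (cellR x j)

/-- Plus (right) trace `u⁺_{j+1/2}` at the interface to the right of cell `j`
(cell indices are periodic: the cell to the right of cell `j` is `j + 1` in `Fin N`). -/
def trP {N : ℕ} [NeZero N] (x : Fin (N + 1) → ℝ) (u : Fin N → ℝ → ℝ → ℝ) (t : ℝ) (j : Fin N) : ℝ :=
  u (j + 1) t (cellL x (j + 1))

/-- Interface average `ū_{j+1/2} = (u⁺ + u⁻)/2`. -/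
def avgI {N : ℕ} [NeZero N] (x : Fin (N + 1) → ℝ) (u : Fin N → ℝ → ℝ → ℝ) (t : ℝ) (j : Fin N) : ℝ :=
  (trP x u t j + trM x u t j) / 2

/-- Averaged interface wave speed `c̄_{j+1/2} = (c(ψ⁺) + c(ψ⁻))/2`. -/
def cbarI {N : ℕ} [NeZero N] (α β : ℝ) (x : Fin (N + 1) → ℝ)
    (ψ : Fin N → ℝ → ℝ → ℝ) (t : ℝ) (j : Fin N) : ℝ :=
  (waveC α β (trP x ψ t j) + waveC α β (trM x ψ t j)) / 2

/-- `f : ℝ → ℝ` is (the cell restriction of) a polynomial of degree `≤ p`,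
i.e. the cell belongs to the space `X^p_Δx`. -/
def IsPolyDeg (p : ℕ) (f : ℝ → ℝ) : Prop :=
  ∃ q : Polynomial ℝ, q.natDegree ≤ p ∧ ∀ y : ℝ, f y = q.eval y

/-- energy conservation for the semi-discrete energy-conservative
DG scheme based on the Riemann-invariant (`R,S`) formulation, with periodic
boundary conditions: the discrete energy
`t ↦ Σ_j ∫_{Ω_j} (R² + S²)/2 dx` has derivative zero on `[0,T]`. -/
theorem dg_RS_conservative_energy
    (N p : ℕ) [NeZero N] (T α β : ℝ) (hT : 0 < T) (hα : 0 < α) (hβ : 0 < β)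
    (x : Fin (N + 1) → ℝ) (hx : StrictMono x)
    (R S ψ : Fin N → ℝ → ℝ → ℝ)
    (hRreg : ∀ j, ContDiff ℝ 1 (Function.uncurry (R j)))
    (hSreg : ∀ j, ContDiff ℝ 1 (Function.uncurry (S j)))
    (hψreg : ∀ j, ContDiff ℝ 1 (Function.uncurry (ψ j)))
    (hRpoly : ∀ j t, IsPolyDeg p (R j t))
    (hSpoly : ∀ j t, IsPolyDeg p (S j t))
    (hψpoly : ∀ j t, IsPolyDeg p (ψ j t))
    -- scheme equation (i) (the `R`-equation), for all test functions `φ ∈ X^p_Δx`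
    (hscheme1 : ∀ φ : Fin N → Polynomial ℝ, (∀ j, (φ j).natDegree ≤ p) →
      ∀ t ∈ Set.Icc (0 : ℝ) T,
        (∑ j : Fin N, ∫ y in cellL x j..cellR x j,
            deriv (fun s => R j s y) t * (φ j).eval y)
        + (∑ j : Fin N, ∫ y in cellL x j..cellR x j,
            waveC α β (ψ j t y) * R j t y * deriv (fun z => (φ j).eval z) y)
        - (∑ j : Fin N, cbarI α β x ψ t j * avgI x R t j * (φ j).eval (cellR x j))
        + (∑ j : Fin N,
            cbarI α β x ψ t (j - 1) * avgI x R t (j - 1) * (φ j).eval (cellL x j))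
        =
        (1 / 2) * (∑ j : Fin N, ∫ y in cellL x j..cellR x j,
            waveC α β (ψ j t y) * deriv (fun z => R j t z * (φ j).eval z) y)
        - (1 / 2) * (∑ j : Fin N,
            cbarI α β x ψ t j * trM x R t j * (φ j).eval (cellR x j))
        + (1 / 2) * (∑ j : Fin N,
            cbarI α β x ψ t (j - 1) * trP x R t (j - 1) * (φ j).eval (cellL x j))
        - (1 / 2) * (∑ j : Fin N, ∫ y in cellL x j..cellR x j,
            waveC α β (ψ j t y) * deriv (fun z => S j t z * (φ j).eval z) y)
        + (1 / 2) * (∑ j : Fin N,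
            cbarI α β x ψ t j * trM x S t j * (φ j).eval (cellR x j))
        - (1 / 2) * (∑ j : Fin N,
            cbarI α β x ψ t (j - 1) * trP x S t (j - 1) * (φ j).eval (cellL x j)))
    -- scheme equation (ii) (the `S`-equation), for all test functions `η ∈ X^p_Δx`
    (hscheme2 : ∀ η : Fin N → Polynomial ℝ, (∀ j, (η j).natDegree ≤ p) →
      ∀ t ∈ Set.Icc (0 : ℝ) T,
        (∑ j : Fin N, ∫ y in cellL x j..cellR x j,
            deriv (fun s => S j s y) t * (η j).eval y)
        - (∑ j : Fin N, ∫ y in cellL x j..cellR x j,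
            waveC α β (ψ j t y) * S j t y * deriv (fun z => (η j).eval z) y)
        + (∑ j : Fin N, cbarI α β x ψ t j * avgI x S t j * (η j).eval (cellR x j))
        - (∑ j : Fin N,
            cbarI α β x ψ t (j - 1) * avgI x S t (j - 1) * (η j).eval (cellL x j))
        =
        (1 / 2) * (∑ j : Fin N, ∫ y in cellL x j..cellR x j,
            waveC α β (ψ j t y) * deriv (fun z => R j t z * (η j).eval z) y)
        - (1 / 2) * (∑ j : Fin N,
            cbarI α β x ψ t j * trM x R t j * (η j).eval (cellR x j))
        + (1 / 2) * (∑ j : Fin N,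
            cbarI α β x ψ t (j - 1) * trP x R t (j - 1) * (η j).eval (cellL x j))
        - (1 / 2) * (∑ j : Fin N, ∫ y in cellL x j..cellR x j,
            waveC α β (ψ j t y) * deriv (fun z => S j t z * (η j).eval z) y)
        + (1 / 2) * (∑ j : Fin N,
            cbarI α β x ψ t j * trM x S t j * (η j).eval (cellR x j))
        - (1 / 2) * (∑ j : Fin N,
            cbarI α β x ψ t (j - 1) * trP x S t (j - 1) * (η j).eval (cellL x j)))
    -- scheme equation (iii) (the `ψ`-equation), for all test functions `ζ ∈ X^p_Δx`
    (hscheme3 : ∀ ζ : Fin N → Polynomial ℝ, (∀ j, (ζ j).natDegree ≤ p) →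
      ∀ t ∈ Set.Icc (0 : ℝ) T,
        (∑ j : Fin N, ∫ y in cellL x j..cellR x j,
            deriv (fun s => ψ j s y) t * (ζ j).eval y)
        = ∑ j : Fin N, ∫ y in cellL x j..cellR x j,
            (R j t y + S j t y) / 2 * (ζ j).eval y) :
    ∀ t ∈ Set.Icc (0 : ℝ) T,
      HasDerivAt
        (fun s => ∑ j : Fin N, ∫ y in cellL x j..cellR x j,
          (R j s y ^ 2 + S j s y ^ 2) / 2)
        0 t := by
  intro t ht
  choose QR hQRdeg hQReval using fun j => hRpoly j t
  choose QS hQSdeg hQSeval using fun j => hSpoly j t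
  have h1 := hscheme1 QR hQRdeg t ht
  have h2 := hscheme2 QS hQSdeg t ht
  simp only [← hQReval] at h1
  simp only [← hQSeval] at h2
  have hsub : ∀ j : Fin N, j - 1 + 1 = j := fun j => sub_add_cancel _ _
  have htrMR : ∀ j : Fin N, R j t (cellR x j) = trM x R t j := fun j => rfl
  have htrMS : ∀ j : Fin N, S j t (cellR x j) = trM x S t j := fun j => rfl
  have htrPR : ∀ j : Fin N, R j t (cellL x j) = trP x R t (j - 1) := by
    intro j; simp only [trP, hsub]
  have htrPS : ∀ j : Fin N, S j t (cellL x j) = trP x S t (j - 1) := by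
    intro j; simp only [trP, hsub]
  simp only [htrMR, htrPR] at h1
  simp only [htrMS, htrPS] at h2
  have hre1 : (∑ j : Fin N, cbarI α β x ψ t (j - 1) * avgI x R t (j - 1) * trP x R t (j - 1))
      = ∑ j : Fin N, cbarI α β x ψ t j * avgI x R t j * trP x R t j :=
    Fintype.sum_equiv (Equiv.subRight 1) _ _ fun j => rfl
  have hre2 : (∑ j : Fin N, cbarI α β x ψ t (j - 1) * trP x R t (j - 1) * trP x R t (j - 1))
      = ∑ j : Fin N, cbarI α β x ψ t j * trP x R t j * trP x R t j :=
    Fintype.sum_equiv (Equiv.subRight 1) _ _ fun j => rfl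
  have hre3 : (∑ j : Fin N, cbarI α β x ψ t (j - 1) * trP x S t (j - 1) * trP x R t (j - 1))
      = ∑ j : Fin N, cbarI α β x ψ t j * trP x S t j * trP x R t j :=
    Fintype.sum_equiv (Equiv.subRight 1) _ _ fun j => rfl
  have hre4 : (∑ j : Fin N, cbarI α β x ψ t (j - 1) * avgI x S t (j - 1) * trP x S t (j - 1))
      = ∑ j : Fin N, cbarI α β x ψ t j * avgI x S t j * trP x S t j :=
    Fintype.sum_equiv (Equiv.subRight 1) _ _ fun j => rfl
  have hre5 : (∑ j : Fin N, cbarI α β x ψ t (j - 1) * trP x S t (j - 1) * trP x S t (j - 1))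
      = ∑ j : Fin N, cbarI α β x ψ t j * trP x S t j * trP x S t j :=
    Fintype.sum_equiv (Equiv.subRight 1) _ _ fun j => rfl
  have hre6 : (∑ j : Fin N, cbarI α β x ψ t (j - 1) * trP x R t (j - 1) * trP x S t (j - 1))
      = ∑ j : Fin N, cbarI α β x ψ t j * trP x R t j * trP x S t j :=
    Fintype.sum_equiv (Equiv.subRight 1) _ _ fun j => rfl
  rw [hre1, hre2, hre3] at h1
  rw [hre4, hre5, hre6] at h2
  have hgR : ∀ (j : Fin N) (y : ℝ),
      HasDerivAt (fun z => R j t z) (deriv (fun z => R j t z) y) y := by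
    intro j y
    have h := (Polynomial.hasDerivAt (QR j) y).congr_of_eventuallyEq
      (Filter.Eventually.of_forall (hQReval j))
    rw [h.deriv]; exact h
  have hgS : ∀ (j : Fin N) (y : ℝ),
      HasDerivAt (fun z => S j t z) (deriv (fun z => S j t z) y) y := by
    intro j y
    have h := (Polynomial.hasDerivAt (QS j) y).congr_of_eventuallyEq
      (Filter.Eventually.of_forall (hQSeval j))
    rw [h.deriv]; exact h
  have hsqR : ∀ (j : Fin N) (y : ℝ),
      waveC α β (ψ j t y) * deriv (fun z => R j t z * R j t z) y
        = 2 * (waveC α β (ψ j t y) * R j t y * deriv (fun z => R j t z) y) := by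
    intro j y
    have hm : HasDerivAt (fun z => R j t z * R j t z)
        (deriv (fun z => R j t z) y * R j t y + R j t y * deriv (fun z => R j t z) y) y :=
      (hgR j y).mul (hgR j y)
    rw [hm.deriv]; ring
  have hsqS : ∀ (j : Fin N) (y : ℝ),
      waveC α β (ψ j t y) * deriv (fun z => S j t z * S j t z) y
        = 2 * (waveC α β (ψ j t y) * S j t y * deriv (fun z => S j t z) y) := by
    intro j y
    have hm : HasDerivAt (fun z => S j t z * S j t z)
        (deriv (fun z => S j t z) y * S j t y + S j t y * deriv (fun z => S j t z) y) y :=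
      (hgS j y).mul (hgS j y)
    rw [hm.deriv]; ring
  have hswap : ∀ (j : Fin N) (y : ℝ),
      deriv (fun z => S j t z * R j t z) y = deriv (fun z => R j t z * S j t z) y := by
    intro j y
    rw [show (fun z => S j t z * R j t z) = fun z => R j t z * S j t z from
      funext fun z => mul_comm _ _]
  simp only [hsqR, hswap] at h1
  simp only [hsqS] at h2
  simp only [intervalIntegral.integral_const_mul] at h1 h2
  rw [← Finset.mul_sum] at h1
  rw [← Finset.mul_sum] at h2
  have hIc : (∑ j : Fin N, cbarI α β x ψ t j * trM x S t j * trM x R t j)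
      = ∑ j : Fin N, cbarI α β x ψ t j * trM x R t j * trM x S t j :=
    Finset.sum_congr rfl fun j _ => by ring
  have hJc : (∑ j : Fin N, cbarI α β x ψ t j * trP x S t j * trP x R t j)
      = ∑ j : Fin N, cbarI α β x ψ t j * trP x R t j * trP x S t j :=
    Finset.sum_congr rfl fun j _ => by ring
  rw [hIc, hJc] at h1
  have hCDR : (∑ j : Fin N, cbarI α β x ψ t j * avgI x R t j * trM x R t j)
      - (∑ j : Fin N, cbarI α β x ψ t j * avgI x R t j * trP x R t j)
      = (1 / 2) * (∑ j : Fin N, cbarI α β x ψ t j * trM x R t j * trM x R t j)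
      - (1 / 2) * (∑ j : Fin N, cbarI α β x ψ t j * trP x R t j * trP x R t j) := by
    rw [Finset.mul_sum, Finset.mul_sum, ← Finset.sum_sub_distrib, ← Finset.sum_sub_distrib]
    exact Finset.sum_congr rfl fun j _ => by simp only [avgI]; ring
  have hCDS : (∑ j : Fin N, cbarI α β x ψ t j * avgI x S t j * trM x S t j)
      - (∑ j : Fin N, cbarI α β x ψ t j * avgI x S t j * trP x S t j)
      = (1 / 2) * (∑ j : Fin N, cbarI α β x ψ t j * trM x S t j * trM x S t j)
      - (1 / 2) * (∑ j : Fin N, cbarI α β x ψ t j * trP x S t j * trP x S t j) := by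
    rw [Finset.mul_sum, Finset.mul_sum, ← Finset.sum_sub_distrib, ← Finset.sum_sub_distrib]
    exact Finset.sum_congr rfl fun j _ => by simp only [avgI]; ring
  have hzero : (∑ j : Fin N, ∫ y in cellL x j..cellR x j,
        deriv (fun s => R j s y) t * R j t y)
      + (∑ j : Fin N, ∫ y in cellL x j..cellR x j,
        deriv (fun s => S j s y) t * S j t y) = 0 := by
    linarith [h1, h2, hCDR, hCDS]
  have hcpair : ∀ j : Fin N,
      ContDiff ℝ 1 (Function.uncurry fun s y => (R j s y ^ 2 + S j s y ^ 2) / 2) := by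
    intro j
    have hh : (Function.uncurry fun s y => (R j s y ^ 2 + S j s y ^ 2) / 2)
        = fun q : ℝ × ℝ =>
            ((Function.uncurry (R j)) q ^ 2 + (Function.uncurry (S j)) q ^ 2) / 2 := rfl
    rw [hh]
    exact (((hRreg j).pow 2).add ((hSreg j).pow 2)).div_const 2
  have hE : HasDerivAt
      (fun s => ∑ j : Fin N, ∫ y in cellL x j..cellR x j, (R j s y ^ 2 + S j s y ^ 2) / 2)
      (∑ j : Fin N, ∫ y in cellL x j..cellR x j,
        deriv (fun s => (R j s y ^ 2 + S j s y ^ 2) / 2) t) t :=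
    HasDerivAt.fun_sum fun j _ =>
      hasDerivAt_intervalIntegral_param (cellL x j) (cellR x j) _ (hcpair j) t
  have hsplit : (∑ j : Fin N, ∫ y in cellL x j..cellR x j,
        deriv (fun s => (R j s y ^ 2 + S j s y ^ 2) / 2) t)
      = (∑ j : Fin N, ∫ y in cellL x j..cellR x j, deriv (fun s => R j s y) t * R j t y)
      + (∑ j : Fin N, ∫ y in cellL x j..cellR x j, deriv (fun s => S j s y) t * S j t y) := by
    rw [← Finset.sum_add_distrib]
    refine Finset.sum_congr rfl fun j _ => ?_
    have hptw : ∀ y : ℝ, deriv (fun s => (R j s y ^ 2 + S j s y ^ 2) / 2) t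
        = deriv (fun s => R j s y) t * R j t y + deriv (fun s => S j s y) t * S j t y := by
      intro y
      have hR : HasDerivAt (fun s => R j s y) (deriv (fun s => R j s y) t) t :=
        (partial_hasDerivAt (R j) (hRreg j) t y).differentiableAt.hasDerivAt
      have hS : HasDerivAt (fun s => S j s y) (deriv (fun s => S j s y) t) t :=
        (partial_hasDerivAt (S j) (hSreg j) t y).differentiableAt.hasDerivAt
      have hp : HasDerivAt (fun s => (R j s y ^ 2 + S j s y ^ 2) / 2)
          ((((2 : ℕ) : ℝ) * R j t y ^ 1 * deriv (fun s => R j s y) t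
            + ((2 : ℕ) : ℝ) * S j t y ^ 1 * deriv (fun s => S j s y) t) / 2) t :=
        ((hR.pow 2).add (hS.pow 2)).div_const 2
      rw [hp.deriv]; push_cast; ring
    have hint1 : IntervalIntegrable (fun y => deriv (fun s => R j s y) t * R j t y)
        MeasureTheory.volume (cellL x j) (cellR x j) := by
      apply Continuous.intervalIntegrable
      exact (((partial_deriv_continuous (R j) (hRreg j)).comp (Continuous.prodMk_right t)).mul
        ((hRreg j).continuous.comp (Continuous.prodMk_right t)))
    have hint2 : IntervalIntegrable (fun y => deriv (fun s => S j s y) t * S j t y)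
        MeasureTheory.volume (cellL x j) (cellR x j) := by
      apply Continuous.intervalIntegrable
      exact (((partial_deriv_continuous (S j) (hSreg j)).comp (Continuous.prodMk_right t)).mul
        ((hSreg j).continuous.comp (Continuous.prodMk_right t)))
    simp only [hptw]
    exact intervalIntegral.integral_add hint1 hint2
  have hfin : (∑ j : Fin N, ∫ y in cellL x j..cellR x j,
      deriv (fun s => (R j s y ^ 2 + S j s y ^ 2) / 2) t) = 0 := by
    rw [hsplit]; exact hzero
  exact hfin ▸ hE


end
end

section
/- Let v, w, ψ be a numerical solution of the semi-discrete energy-conservative DG scheme for the (v,w) formulation with periodic boundary conditions; that is, for every t ∈ [0,T] and all test functions φ, η, ζ ∈ X^p_Δx(Ω): (i) Σ_{j=1}^N [ ∫_{Ω_j} ∂_tv·φ dx + ∫_{Ω_j} c(ψ)·w·∂_xφ dx − c̄_{j+1/2}·w̄_{j+1/2}·φ⁻_{j+1/2} + c̄_{j−1/2}·w̄_{j−1/2}·φ⁺_{j−1/2} ] = Σ_{j=1}^N [ ∫_{Ω_j} c(ψ)·∂_x(wφ) dx − c̄_{j+1/2}·w⁻_{j+1/2}·φ⁻_{j+1/2}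 + c̄_{j−1/2}·w⁺_{j−1/2}·φ⁺_{j−1/2} ]; (ii) Σ_{j=1}^N [ ∫_{Ω_j} ∂_tw·η dx + ∫_{Ω_j} c(ψ)·v·∂_xη dx − c̄_{j+1/2}·v̄_{j+1/2}·η⁻_{j+1/2} + c̄_{j−1/2}·v̄_{j−1/2}·η⁺_{j−1/2} ] = 0; (iii) Σ_{j=1}^N ∫_{Ω_j} ∂_tψ·ζ dx = Σ_{j=1}^N ∫_{Ω_j} v·ζ dx. Then the discrete energy t ↦ Σ_{j=1}^N ∫_{Ω_j} ( v(t,x)² + w(t,x)² ) dx has derivative zero for every t ∈ [0,T], i.e. it is constant in time. -/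
open Finset

noncomputable section

lemma aux_partial_hasDerivAt {f : ℝ → ℝ → ℝ} (hf : ContDiff ℝ 1 (Function.uncurry f))
    (t y : ℝ) :
    HasDerivAt (fun s => f s y) ((fderiv ℝ (Function.uncurry f) (t, y)) (1, 0)) t := by
  have h1 : HasDerivAt (fun s : ℝ => (s, y)) ((1 : ℝ), (0 : ℝ)) t :=
    (hasDerivAt_id t).prodMk (hasDerivAt_const t y)
  have h2 : HasFDerivAt (Function.uncurry f) (fderiv ℝ (Function.uncurry f) (t, y)) (t, y) :=
    ((hf.differentiable one_ne_zero) (t, y)).hasFDerivAt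
  exact h2.comp_hasDerivAt t h1

lemma aux_partial_continuous {f : ℝ → ℝ → ℝ} (hf : ContDiff ℝ 1 (Function.uncurry f))
    (t : ℝ) : Continuous fun y => deriv (fun s => f s y) t := by
  have h : (fun y => deriv (fun s => f s y) t)
      = fun y => (fderiv ℝ (Function.uncurry f) (t, y)) (1, 0) :=
    funext fun y => (aux_partial_hasDerivAt hf t y).deriv
  rw [h]
  exact ((hf.continuous_fderiv one_ne_zero).comp (Continuous.prodMk_right t)).clm_apply continuous_const

lemma aux_hasDerivAt_param {f : ℝ → ℝ → ℝ} (hf : ContDiff ℝ 1 (Function.uncurry f))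
    (a b t : ℝ) :
    HasDerivAt (fun s => ∫ y in a..b, f s y)
      (∫ y in a..b, deriv (fun s => f s y) t) t := by
  set g : ℝ × ℝ → ℝ := fun z => (fderiv ℝ (Function.uncurry f) z) (1, 0) with hgdef
  have hg : Continuous g := (hf.continuous_fderiv one_ne_zero).clm_apply continuous_const
  have hK : IsCompact (Metric.closedBall t 1 ×ˢ Set.uIcc a b) :=
    (isCompact_closedBall t 1).prod isCompact_uIcc
  obtain ⟨C, hC⟩ := hK.exists_bound_of_continuousOn hg.continuousOn
  have key := (intervalIntegral.hasDerivAt_integral_of_dominated_loc_of_deriv_le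
      (F := f) (F' := fun s y => g (s, y)) (x₀ := t) (s := Metric.ball t 1) (bound := fun _ => C)
      (μ := MeasureTheory.volume) (a := a) (b := b)
      (Metric.ball_mem_nhds t one_pos)
      (Filter.Eventually.of_forall fun s =>
        ((hf.continuous.comp (Continuous.prodMk_right s)).aestronglyMeasurable))
      ((hf.continuous.comp (Continuous.prodMk_right t)).intervalIntegrable a b)
      ((hg.comp (Continuous.prodMk_right t)).aestronglyMeasurable)
      (Filter.Eventually.of_forall fun y hy s hs =>
        hC (s, y) ⟨Metric.ball_subset_closedBall hs, Set.uIoc_subset_uIcc hy⟩)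
      intervalIntegrable_const
      (Filter.Eventually.of_forall fun y _ s _ => aux_partial_hasDerivAt hf s y)).2
  have h : (∫ y in a..b, deriv (fun s => f s y) t) = ∫ y in a..b, g (t, y) :=
    intervalIntegral.integral_congr fun y _ => (aux_partial_hasDerivAt hf t y).deriv
  rw [h]
  exact key


/-- energy conservation for the semi-discrete energy-conservative
DG scheme based on the `(v,w)` formulation, with periodic boundary conditions:
the discrete energy `t ↦ Σ_j ∫_{Ω_j} (v² + w²) dx` has derivative zero on
`[0,T]`. -/
theorem dg_vw_conservative_energy
    (N p : ℕ) [NeZero N] (T α β : ℝ) (hT : 0 < T) (hα : 0 < α) (hβ : 0 < β)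
    (x : Fin (N + 1) → ℝ) (hx : StrictMono x)
    (v w ψ : Fin N → ℝ → ℝ → ℝ)
    (hvreg : ∀ j, ContDiff ℝ 1 (Function.uncurry (v j)))
    (hwreg : ∀ j, ContDiff ℝ 1 (Function.uncurry (w j)))
    (hψreg : ∀ j, ContDiff ℝ 1 (Function.uncurry (ψ j)))
    (hvpoly : ∀ j t, IsPolyDeg p (v j t))
    (hwpoly : ∀ j t, IsPolyDeg p (w j t))
    (hψpoly : ∀ j t, IsPolyDeg p (ψ j t))
    -- scheme equation (i) (the `v`-equation), for all test functions `φ ∈ X^p_Δx`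
    (hscheme1 : ∀ φ : Fin N → Polynomial ℝ, (∀ j, (φ j).natDegree ≤ p) →
      ∀ t ∈ Set.Icc (0 : ℝ) T,
        (∑ j : Fin N, ∫ y in cellL x j..cellR x j,
            deriv (fun s => v j s y) t * (φ j).eval y)
        + (∑ j : Fin N, ∫ y in cellL x j..cellR x j,
            waveC α β (ψ j t y) * w j t y * deriv (fun z => (φ j).eval z) y)
        - (∑ j : Fin N, cbarI α β x ψ t j * avgI x w t j * (φ j).eval (cellR x j))
        + (∑ j : Fin N,
            cbarI α β x ψ t (j - 1) * avgI x w t (j - 1) * (φ j).eval (cellL x j))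
        =
        (∑ j : Fin N, ∫ y in cellL x j..cellR x j,
            waveC α β (ψ j t y) * deriv (fun z => w j t z * (φ j).eval z) y)
        - (∑ j : Fin N, cbarI α β x ψ t j * trM x w t j * (φ j).eval (cellR x j))
        + (∑ j : Fin N,
            cbarI α β x ψ t (j - 1) * trP x w t (j - 1) * (φ j).eval (cellL x j)))
    -- scheme equation (ii) (the `w`-equation), for all test functions `η ∈ X^p_Δx`
    (hscheme2 : ∀ η : Fin N → Polynomial ℝ, (∀ j, (η j).natDegree ≤ p) →
      ∀ t ∈ Set.Icc (0 : ℝ) T,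
        (∑ j : Fin N, ∫ y in cellL x j..cellR x j,
            deriv (fun s => w j s y) t * (η j).eval y)
        + (∑ j : Fin N, ∫ y in cellL x j..cellR x j,
            waveC α β (ψ j t y) * v j t y * deriv (fun z => (η j).eval z) y)
        - (∑ j : Fin N, cbarI α β x ψ t j * avgI x v t j * (η j).eval (cellR x j))
        + (∑ j : Fin N,
            cbarI α β x ψ t (j - 1) * avgI x v t (j - 1) * (η j).eval (cellL x j))
        = 0)
    -- scheme equation (iii) (the `ψ`-equation), for all test functions `ζ ∈ X^p_Δx`
    (hscheme3 : ∀ ζ : Fin N → Polynomial ℝ, (∀ j, (ζ j).natDegree ≤ p) →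
      ∀ t ∈ Set.Icc (0 : ℝ) T,
        (∑ j : Fin N, ∫ y in cellL x j..cellR x j,
            deriv (fun s => ψ j s y) t * (ζ j).eval y)
        = ∑ j : Fin N, ∫ y in cellL x j..cellR x j, v j t y * (ζ j).eval y) :
    ∀ t ∈ Set.Icc (0 : ℝ) T,
      HasDerivAt
        (fun s => ∑ j : Fin N, ∫ y in cellL x j..cellR x j,
          (v j s y ^ 2 + w j s y ^ 2))
        0 t := by
  intro t ht
  classical
  choose qv hqvdeg hqveq using fun j : Fin N => hvpoly j t
  choose qw hqwdeg hqweq using fun j : Fin N => hwpoly j t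
  -- continuity facts
  have hψc : ∀ j, Continuous (ψ j t) := fun j =>
    (hψreg j).continuous.comp (Continuous.prodMk_right t)
  have hvc : ∀ j, Continuous (v j t) := fun j =>
    (hvreg j).continuous.comp (Continuous.prodMk_right t)
  have hwc : ∀ j, Continuous (w j t) := fun j =>
    (hwreg j).continuous.comp (Continuous.prodMk_right t)
  have hcψ : ∀ j, Continuous fun y => waveC α β (ψ j t y) := by
    intro j
    simp only [waveC]
    exact Real.continuous_sqrt.comp
      ((continuous_const.mul ((Real.continuous_cos.comp (hψc j)).pow 2)).add
        (continuous_const.mul ((Real.continuous_sin.comp (hψc j)).pow 2)))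
  have hdvc : ∀ j, Continuous fun y => deriv (fun s => v j s y) t := fun j =>
    aux_partial_continuous (hvreg j) t
  have hdwc : ∀ j, Continuous fun y => deriv (fun s => w j s y) t := fun j =>
    aux_partial_continuous (hwreg j) t
  -- scheme with test functions qv, qw
  have S1 := hscheme1 qv hqvdeg t ht
  have S2 := hscheme2 qw hqwdeg t ht
  -- trace rewriting
  have eMv : ∀ j, (qv j).eval (cellR x j) = trM x v t j := fun j => (hqveq j _).symm
  have eMw : ∀ j, (qw j).eval (cellR x j) = trM x w t j := fun j => (hqweq j _).symm
  have eLv : ∀ j : Fin N, (qv j).eval (cellL x j) = trP x v t (j - 1) := by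
    intro j
    rw [trP, sub_add_cancel]
    exact (hqveq j _).symm
  have eLw : ∀ j : Fin N, (qw j).eval (cellL x j) = trP x w t (j - 1) := by
    intro j
    rw [trP, sub_add_cancel]
    exact (hqweq j _).symm
  simp only [eMv, eMw, eLv, eLw] at S1 S2
  -- reindexing of the `j - 1` sums
  have reidx : ∀ G : Fin N → ℝ, (∑ j : Fin N, G (j - 1)) = ∑ j, G j := fun G =>
    Equiv.sum_comp (Equiv.subRight (1 : Fin N)) G
  rw [reidx (fun k => cbarI α β x ψ t k * avgI x w t k * trP x v t k),
      reidx (fun k => cbarI α β x ψ t k * trP x w t k * trP x v t k)] at S1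
  rw [reidx (fun k => cbarI α β x ψ t k * avgI x v t k * trP x w t k)] at S2
  -- integral identity: C1 + C2 = R1
  have hC : (∑ j : Fin N, ∫ y in cellL x j..cellR x j,
        waveC α β (ψ j t y) * w j t y * deriv (fun z => (qv j).eval z) y)
      + (∑ j : Fin N, ∫ y in cellL x j..cellR x j,
        waveC α β (ψ j t y) * v j t y * deriv (fun z => (qw j).eval z) y)
      = ∑ j : Fin N, ∫ y in cellL x j..cellR x j,
        waveC α β (ψ j t y) * deriv (fun z => w j t z * (qv j).eval z) y := by
    rw [← Finset.sum_add_distrib]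
    refine Finset.sum_congr rfl fun j _ => ?_
    have hprod : (fun z => w j t z * (qv j).eval z)
        = fun z => ((qw j) * (qv j)).eval z :=
      funext fun z => by rw [Polynomial.eval_mul, ← hqweq j z]
    rw [hprod]
    simp only [Polynomial.deriv, Polynomial.derivative_mul]
    rw [← intervalIntegral.integral_add
      (f := fun y => waveC α β (ψ j t y) * w j t y * (qv j).derivative.eval y)
      (g := fun y => waveC α β (ψ j t y) * v j t y * (qw j).derivative.eval y)
      ((((hcψ j).mul (hwc j)).mul (qv j).derivative.continuous).intervalIntegrable _ _)
      ((((hcψ j).mul (hvc j)).mul (qw j).derivative.continuous).intervalIntegrable _ _)]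
    refine intervalIntegral.integral_congr fun y _ => ?_
    simp only [Polynomial.eval_add, Polynomial.eval_mul]
    rw [hqweq j y, hqveq j y]
    ring
  -- boundary identity
  have hB : (∑ j : Fin N, cbarI α β x ψ t j * avgI x w t j * trP x v t j)
      + (∑ j : Fin N, cbarI α β x ψ t j * avgI x v t j * trP x w t j)
      + (∑ j : Fin N, cbarI α β x ψ t j * trM x w t j * trM x v t j)
      = (∑ j : Fin N, cbarI α β x ψ t j * avgI x w t j * trM x v t j)
      + (∑ j : Fin N, cbarI α β x ψ t j * avgI x v t j * trM x w t j)
      + (∑ j : Fin N, cbarI α β x ψ t j * trP x w t j * trP x v t j) := by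
    simp only [← Finset.sum_add_distrib]
    refine Finset.sum_congr rfl fun j _ => ?_
    simp only [avgI]
    ring
  have key : (∑ j : Fin N, ∫ y in cellL x j..cellR x j,
        deriv (fun s => v j s y) t * (qv j).eval y)
      + (∑ j : Fin N, ∫ y in cellL x j..cellR x j,
        deriv (fun s => w j s y) t * (qw j).eval y) = 0 := by
    linear_combination S1 + S2 - hC - hB
  -- differentiation under the integral sign
  have hder : ∀ j : Fin N, HasDerivAt
      (fun s => ∫ y in cellL x j..cellR x j, (v j s y ^ 2 + w j s y ^ 2))
      (∫ y in cellL x j..cellR x j, deriv (fun s => v j s y ^ 2 + w j s y ^ 2) t) t := by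
    intro j
    refine aux_hasDerivAt_param ?_ _ _ t
    exact ((hvreg j).pow 2).add ((hwreg j).pow 2)
  have Hsum := HasDerivAt.fun_sum (fun j (_ : j ∈ Finset.univ) => hder j)
  -- compute the derivative value
  have hptw : ∀ (j : Fin N) (y : ℝ), deriv (fun s => v j s y ^ 2 + w j s y ^ 2) t
      = 2 * (deriv (fun s => v j s y) t * (qv j).eval y)
        + 2 * (deriv (fun s => w j s y) t * (qw j).eval y) := by
    intro j y
    have hv := aux_partial_hasDerivAt (hvreg j) t y
    have hw := aux_partial_hasDerivAt (hwreg j) t y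
    have h := ((hv.pow 2).add (hw.pow 2)).deriv
    rw [show (fun s => v j s y ^ 2 + w j s y ^ 2) = (fun s => v j s y) ^ 2 + (fun s => w j s y) ^ 2 from rfl,
      h, ← hv.deriv, ← hw.deriv, ← hqveq j y, ← hqweq j y]
    norm_num
    ring
  have hintj : ∀ j : Fin N,
      (∫ y in cellL x j..cellR x j, deriv (fun s => v j s y ^ 2 + w j s y ^ 2) t)
      = 2 * (∫ y in cellL x j..cellR x j, deriv (fun s => v j s y) t * (qv j).eval y)
        + 2 * (∫ y in cellL x j..cellR x j, deriv (fun s => w j s y) t * (qw j).eval y) := by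
    intro j
    rw [intervalIntegral.integral_congr (fun y (_ : y ∈ Set.uIcc _ _) => hptw j y)]
    rw [intervalIntegral.integral_add
        (f := fun y => 2 * (deriv (fun s => v j s y) t * (qv j).eval y))
        (g := fun y => 2 * (deriv (fun s => w j s y) t * (qw j).eval y))
        ((continuous_const.mul ((hdvc j).mul (qv j).continuous)).intervalIntegrable _ _)
        ((continuous_const.mul ((hdwc j).mul (qw j).continuous)).intervalIntegrable _ _),
      intervalIntegral.integral_const_mul, intervalIntegral.integral_const_mul]
  have hzero : (∑ j : Fin N, ∫ y in cellL x j..cellR x j,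
      deriv (fun s => v j s y ^ 2 + w j s y ^ 2) t) = 0 := by
    calc (∑ j : Fin N, ∫ y in cellL x j..cellR x j,
        deriv (fun s => v j s y ^ 2 + w j s y ^ 2) t)
        = ∑ j : Fin N,
          (2 * (∫ y in cellL x j..cellR x j, deriv (fun s => v j s y) t * (qv j).eval y)
          + 2 * (∫ y in cellL x j..cellR x j, deriv (fun s => w j s y) t * (qw j).eval y)) :=
          Finset.sum_congr rfl fun j _ => hintj j
      _ = 0 := by
          rw [Finset.sum_add_distrib, ← Finset.mul_sum, ← Finset.mul_sum]
          linear_combination 2 * key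
  rw [hzero] at Hsum
  exact Hsum


end
end

section
/- Define φ : [0,1] → ℝ by φ(ξ) = arccos(1 − 2ξ). Then φ(0) = 0, φ(1) = π, φ is differentiable on the open interval (0,1) with φ′(ξ) = 1/√(ξ − ξ²), and φ satisfies the travelling-wave ordinary differential equation φ′(ξ)·sin(φ(ξ)) = 2 for all ξ ∈ (0,1). -/
lemma tw_key {ξ : ℝ} (h0 : 0 < ξ) (h1 : ξ < 1) :
    Real.sqrt (1 - (1 - 2 * ξ) ^ 2) = 2 * Real.sqrt (ξ - ξ ^ 2) := by
  have : 1 - (1 - 2 * ξ) ^ 2 = 4 * (ξ - ξ ^ 2) := by ring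
  rw [this, show (4 : ℝ) = 2 ^ 2 by norm_num, Real.sqrt_mul (by positivity),
    Real.sqrt_sq (by norm_num)]

lemma tw_deriv (φ : ℝ → ℝ) (hφdef : ∀ ξ : ℝ, φ ξ = Real.arccos (1 - 2 * ξ))
    {ξ : ℝ} (h0 : 0 < ξ) (h1 : ξ < 1) :
    HasDerivAt φ (1 / Real.sqrt (ξ - ξ ^ 2)) ξ := by
  have hne1 : (1 - 2 * ξ) ≠ -1 := by intro h; linarith [h]
  have hne2 : (1 - 2 * ξ) ≠ 1 := by intro h; linarith [h]
  have hinner : HasDerivAt (fun x : ℝ => 1 - 2 * x) (-2) ξ := by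
    simpa using ((hasDerivAt_id ξ).const_mul (2 : ℝ)).const_sub 1
  have h := (Real.hasDerivAt_arccos hne1 hne2).comp ξ hinner
  have hpos : 0 < ξ - ξ ^ 2 := by nlinarith
  have hsq : Real.sqrt (ξ - ξ ^ 2) ≠ 0 := by positivity
  have heq : -(1 / Real.sqrt (1 - (1 - 2 * ξ) ^ 2)) * -2
      = 1 / Real.sqrt (ξ - ξ ^ 2) := by
    rw [tw_key h0 h1]; field_simp
  have hfun : (fun x => Real.arccos (1 - 2 * x)) = φ := by
    ext x; rw [hφdef]
  rw [← heq, ← hfun]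
  exact h

/-- the travelling-wave profile `φ(ξ) = arccos(1 − 2ξ)`
satisfies `φ(0) = 0`, `φ(1) = π`, is differentiable on `(0,1)` with
`φ′(ξ) = 1/√(ξ − ξ²)`, and satisfies the ODE `φ′ sin φ = 2` on `(0,1)`. -/
theorem travelling_wave_profile_properties
    (φ : ℝ → ℝ) (hφdef : ∀ ξ : ℝ, φ ξ = Real.arccos (1 - 2 * ξ)) :
    φ 0 = 0 ∧ φ 1 = Real.pi
    ∧ (∀ ξ ∈ Set.Ioo (0 : ℝ) 1,
        HasDerivAt φ (1 / Real.sqrt (ξ - ξ ^ 2)) ξ)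
    ∧ (∀ ξ ∈ Set.Ioo (0 : ℝ) 1,
        deriv φ ξ * Real.sin (φ ξ) = 2) := by
  refine ⟨by simp [hφdef], by norm_num [hφdef, Real.arccos_neg_one], ?_, ?_⟩
  · exact fun ξ hξ => tw_deriv φ hφdef hξ.1 hξ.2
  · intro ξ hξ
    obtain ⟨h0, h1⟩ := hξ
    rw [(tw_deriv φ hφdef h0 h1).deriv, hφdef, Real.sin_arccos, tw_key h0 h1]
    have hpos : 0 < ξ - ξ ^ 2 := by nlinarith
    have hsq : Real.sqrt (ξ - ξ ^ 2) ≠ 0 := by positivity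
    field_simp
end
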